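/- Let Y, X, Z be random variables on a common probability space taking values in nonempty finite types 𝒴, 𝒳, 𝒵, and let X_v be a random variable (for instance a sub-tuple of X) valued in a finite type. Suppose there exist a finite type 𝒲, a function ρ : 𝒵 → 𝒲, and an injective function h : 𝒳 × 𝒴 → 𝒲 such that ρ(Z) = h(X, Y) almost surely. Then H[Y | (X_v, ρ(Z))] = 0. Consequently, if H[Y | X_v] ≥ γ for some constant γ > 0, then H[Y | X_v] − H[Y | (X_v, ρ(Z))] ≥ γ > 0, so the invariance preserving condition H[Y | (X_v, ρ(Z))] = H[Y | X_v] (Condition 1) is violated. -/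

import Mathlib

open MeasureTheory ProbabilityTheory
open scoped ENNReal

/-- Conditional Shannon entropy `H[Y | W]` (natural logarithm) of a finite-valued random
variable `Y` given a finite-valued random variable `W`, under the measure `μ`. -/
noncomputable def condEnt {Ω 𝒴 𝒲 : Type*} [MeasurableSpace Ω] (μ : Measure Ω)
    [Fintype 𝒴] [Fintype 𝒲] (Y : Ω → 𝒴) (W : Ω → 𝒲) : ℝ :=
  ∑ w : 𝒲, ∑ y : 𝒴,
    -((μ {ω | Y ω = y ∧ W ω = w}).toReal *
      Real.log ((μ {ω | Y ω = y ∧ W ω = w}).toReal / (μ {ω | W ω = w}).toReal))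

/-- **Corollary 1 (b): an environment partition that is an injective function of the pair
`(X, Y)` violates Condition 1.** If `ρ(Z) = h(X, Y)` a.s. for an injective `h`, then
`H[Y | (X_v, ρ(Z))] = 0`; hence if `H[Y | X_v] ≥ γ > 0` then
`H[Y | X_v] - H[Y | (X_v, ρ(Z))] ≥ γ > 0`, violating the invariance preserving condition. -/
theorem partition_injective_of_input_label_violates_condition1
    {Ω 𝒴 𝒳 𝒳v 𝒵 : Type*} [MeasurableSpace Ω] (μ : Measure Ω) [IsProbabilityMeasure μ]
    [Fintype 𝒴] [Nonempty 𝒴] [Fintype 𝒳] [Nonempty 𝒳] [Fintype 𝒳v] [Nonempty 𝒳v]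
    [Fintype 𝒵] [Nonempty 𝒵]
    [MeasurableSpace 𝒴] [MeasurableSingletonClass 𝒴]
    [MeasurableSpace 𝒳] [MeasurableSingletonClass 𝒳]
    [MeasurableSpace 𝒳v] [MeasurableSingletonClass 𝒳v]
    [MeasurableSpace 𝒵] [MeasurableSingletonClass 𝒵]
    (Y : Ω → 𝒴) (X : Ω → 𝒳) (Xv : Ω → 𝒳v) (Z : Ω → 𝒵)
    (hY : Measurable Y) (hX : Measurable X) (hXv : Measurable Xv) (hZ : Measurable Z)
    {𝒲 : Type*} [Fintype 𝒲] (ρ : 𝒵 → 𝒲) (h : 𝒳 × 𝒴 → 𝒲)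
    (hinj : Function.Injective h)
    (hae : ∀ᵐ ω ∂μ, ρ (Z ω) = h (X ω, Y ω)) :
    condEnt μ Y (fun ω => (Xv ω, ρ (Z ω))) = 0 ∧
    ∀ γ : ℝ, 0 < γ → γ ≤ condEnt μ Y Xv →
      γ ≤ condEnt μ Y Xv - condEnt μ Y (fun ω => (Xv ω, ρ (Z ω))) := by
  have hzero : condEnt μ Y (fun ω => (Xv ω, ρ (Z ω))) = 0 := by
    unfold condEnt
    apply Finset.sum_eq_zero
    intro w _
    apply Finset.sum_eq_zero
    intro y _
    set A : Set Ω := {ω | Y ω = y ∧ (Xv ω, ρ (Z ω)) = w} with hA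
    set B : Set Ω := {ω | (Xv ω, ρ (Z ω)) = w} with hB
    by_cases hμA : μ A = 0
    · simp [hμA]
    · -- there is a point in A where the a.e. identity holds
      set G : Set Ω := {ω | ρ (Z ω) = h (X ω, Y ω)} with hG
      have hGc : μ Gᶜ = 0 := hae
      have hAG : μ (A ∩ G) ≠ 0 := by
        intro hc
        apply hμA
        have : μ A ≤ μ (A ∩ G) + μ Gᶜ := by
          calc μ A ≤ μ ((A ∩ G) ∪ Gᶜ) := by
                apply measure_mono
                intro ω hω
                by_cases hg : ω ∈ G
                · exact Or.inl ⟨hω, hg⟩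
                · exact Or.inr hg
            _ ≤ μ (A ∩ G) + μ Gᶜ := measure_union_le _ _
        simpa [hc, hGc] using le_antisymm (by simpa [hc, hGc] using this) zero_le
      obtain ⟨ω₀, hω₀⟩ := nonempty_of_measure_ne_zero hAG
      obtain ⟨⟨hY₀, hW₀⟩, hG₀⟩ := hω₀
      -- B ∩ G ⊆ A
      have hBA : B ∩ G ⊆ A := by
        rintro ω ⟨hωB, hωG⟩
        have h1 : ρ (Z ω) = w.2 := by
          have := congrArg Prod.snd hωB; simpa using this
        have h2 : ρ (Z ω₀) = w.2 := by
          have := congrArg Prod.snd hW₀; simpa using this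
        have hh : h (X ω, Y ω) = h (X ω₀, Y ω₀) := by
          rw [← hωG, ← hG₀, h1, h2]
        have hYω : Y ω = y := by
          have := hinj hh
          have := congrArg Prod.snd this
          simpa [hY₀] using this
        have hXvω : Xv ω = w.1 := by
          have := congrArg Prod.fst hωB; simpa using this
        constructor
        · exact hYω
        · exact Prod.ext hXvω h1
      have hAB : A ⊆ B := fun ω hω => hω.2
      have hμeq : μ A = μ B := by
        apply le_antisymm (measure_mono hAB)
        calc μ B ≤ μ (A ∪ Gᶜ) := by
              apply measure_mono
              intro ω hω
              by_cases hg : ω ∈ G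
              · exact Or.inl (hBA ⟨hω, hg⟩)
              · exact Or.inr hg
          _ ≤ μ A + μ Gᶜ := measure_union_le _ _
          _ = μ A := by rw [hGc, add_zero]
      have hfin : μ A ≠ ⊤ := measure_ne_top μ A
      have htr : (μ A).toReal ≠ 0 := ENNReal.toReal_ne_zero.mpr ⟨hμA, hfin⟩
      rw [← hμeq, div_self htr, Real.log_one, mul_zero, neg_zero]
  refine ⟨hzero, fun γ hγ hγle => ?_⟩
  rw [hzero, sub_zero]
  exact hγle
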